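/- arXiv:2107.13606 — 2 statements merged into one kernel-verified Lean document; each statement's English description precedes it below -/
import Mathlib

section
/- Fix $\delta>0$, $\lambda>0$ and an integer $j\geq 1$, and let $C_\delta = \frac{K_j(\sqrt{\lambda}\delta)}{I_j(\sqrt{\lambda}\delta)}$. Define for $0<\varepsilon<\delta$ $$\sigma(\varepsilon) = \frac{\sqrt{\lambda}\big(C_\delta I_j'(\sqrt{\lambda}\varepsilon)-K_j'(\sqrt{\lambda}\varepsilon)\big)}{K_j(\sqrt{\lambda}\varepsilon)-C_\delta I_j(\sqrt{\lambda}\varepsilon)}.$$ Then $\lim_{\varepsilon\to 0^+}\varepsilon\,\sigma(\varepsilon)=j$. -/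
open MeasureTheory Filter Real Topology

/-- Modified Bessel function of the first kind (integral representation). -/
noncomputable def besselI (ν x : ℝ) : ℝ :=
  (1 / π) * ∫ θ in (0:ℝ)..π, Real.exp (x * Real.cos θ) * Real.cos (ν * θ)
    - (Real.sin (ν * π) / π) * ∫ t in Set.Ioi (0:ℝ), Real.exp (-(x * Real.cosh t) - ν * t)

/-- Modified Bessel function of the second kind (integral representation). -/
noncomputable def besselK (ν x : ℝ) : ℝ :=
  ∫ t in Set.Ioi (0:ℝ), Real.exp (-(x * Real.cosh t)) * Real.cosh (ν * t)

open Set Metric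

namespace Stmt13Aux

lemma cosh_le_exp {t : ℝ} (ht : 0 ≤ t) : Real.cosh t ≤ Real.exp t := by
  rw [Real.cosh_eq]
  have h := Real.exp_le_exp.2 (neg_le_self ht)
  linarith

lemma abs_sinh_le_cosh (t : ℝ) : |Real.sinh t| ≤ Real.cosh t := by
  rw [abs_le, Real.sinh_eq, Real.cosh_eq]
  constructor <;> nlinarith [Real.exp_pos t, Real.exp_pos (-t)]

lemma exp_neg_le (n : ℕ) {s : ℝ} (hs : 0 < s) : Real.exp (-s) ≤ ((n : ℝ) / s) ^ n := by
  have h1 : (s / n) ^ n ≤ Real.exp s := by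
    rcases Nat.eq_zero_or_pos n with h | h
    · simp [h, Real.one_le_exp hs.le]
    · have hn : (0:ℝ) < n := by positivity
      have h2 : s / n ≤ Real.exp (s / n) := by
        have := Real.add_one_le_exp (s / n); linarith
      calc (s/n)^n ≤ (Real.exp (s/n))^n := pow_le_pow_left₀ (by positivity) h2 n
        _ = Real.exp s := by
            rw [← Real.exp_nat_mul]; congr 1; field_simp
  have hpos : (0:ℝ) < (s / n) ^ n := by
    rcases Nat.eq_zero_or_pos n with h | h
    · simp [h]
    · have hn : (0:ℝ) < n := by positivity
      positivity
  rw [Real.exp_neg]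
  calc (Real.exp s)⁻¹ ≤ ((s/n)^n)⁻¹ := by
        exact inv_anti₀ hpos h1
    _ = ((n:ℝ)/s)^n := by
        rw [← inv_pow]; congr 1
        rw [inv_div]

lemma exp_lower (t : ℝ) : Real.exp t / 2 ≤ Real.cosh t := by
  rw [Real.cosh_eq]; have := (Real.exp_pos (-t)).le; linarith

lemma key_exp_bound (x : ℝ) (hx : 0 < x) (n : ℕ) {t : ℝ} (ht : 0 ≤ t) :
    Real.exp (-(x * Real.cosh t)) ≤ (2 * n / x) ^ n * Real.exp (-(n : ℝ) * t) := by
  have hc := exp_lower t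
  have h1 : Real.exp (-(x * Real.cosh t)) ≤ Real.exp (-(x * (Real.exp t / 2))) :=
    Real.exp_le_exp.2 (by nlinarith)
  refine h1.trans ?_
  have hs : 0 < x * (Real.exp t / 2) := by positivity
  refine (exp_neg_le n hs).trans_eq ?_
  have h2 : (n:ℝ) / (x * (Real.exp t / 2)) = (2*n/x) * Real.exp (-t) := by
    rw [Real.exp_neg]
    have := (Real.exp_pos t).ne'
    field_simp
  rw [h2, mul_pow]
  congr 1
  rw [← Real.exp_nat_mul]
  congr 1
  ring

/-- master decay bound -/
lemma decay_bound (x ν : ℝ) (hx : 0 < x) :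
    ∃ c : ℝ, 0 ≤ c ∧ ∀ t : ℝ, 0 ≤ t →
      Real.exp (ν * t - x * Real.cosh t) ≤ c * Real.exp (-t) := by
  set n : ℕ := ⌈ν⌉₊ + 1 with hn
  refine ⟨(2 * n / x) ^ n, by positivity, fun t ht => ?_⟩
  have hcn : ν - n ≤ -1 := by
    have := Nat.le_ceil ν
    have : ν ≤ (⌈ν⌉₊ : ℝ) := this
    push_cast [hn]
    linarith
  have h1 : Real.exp (ν * t - x * Real.cosh t)
      = Real.exp (ν * t) * Real.exp (-(x * Real.cosh t)) := by
    rw [← Real.exp_add]; ring_nf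
  rw [h1]
  calc Real.exp (ν * t) * Real.exp (-(x * Real.cosh t))
      ≤ Real.exp (ν * t) * ((2 * n / x) ^ n * Real.exp (-(n : ℝ) * t)) := by
        have := key_exp_bound x hx n ht
        exact mul_le_mul_of_nonneg_left this (Real.exp_pos _).le
    _ = (2 * n / x) ^ n * Real.exp ((ν - n) * t) := by
        rw [mul_left_comm, ← Real.exp_add]; congr 2; ring
    _ ≤ (2 * n / x) ^ n * Real.exp (-t) := by
        have : (ν - n) * t ≤ -t := by nlinarith
        have := Real.exp_le_exp.2 this
        exact mul_le_mul_of_nonneg_left this (by positivity)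

lemma integrable_exp_lin_cosh (x ν : ℝ) (hx : 0 < x) :
    IntegrableOn (fun t => Real.exp (ν * t - x * Real.cosh t)) (Set.Ioi 0) := by
  obtain ⟨c, hc0, hc⟩ := decay_bound x ν hx
  have hint : IntegrableOn (fun t => c * Real.exp (-1 * t)) (Set.Ioi (0:ℝ)) :=
    (exp_neg_integrableOn_Ioi 0 one_pos).const_mul c
  refine Integrable.mono hint ?_ ?_
  · exact (Continuous.aestronglyMeasurable (by fun_prop)).restrict
  · filter_upwards [ae_restrict_mem measurableSet_Ioi] with t ht
    have h1 := hc t (le_of_lt ht)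
    rw [Real.norm_eq_abs, Real.abs_exp, Real.norm_eq_abs]
    rw [abs_of_nonneg (by positivity)]
    simpa using h1

lemma integrableOn_of_le_exp {f : ℝ → ℝ} (hf : Continuous f) (x ν : ℝ) (hx : 0 < x)
    (hb : ∀ t : ℝ, 0 < t → |f t| ≤ Real.exp (ν * t - x * Real.cosh t)) :
    IntegrableOn f (Set.Ioi 0) := by
  refine Integrable.mono (integrable_exp_lin_cosh x ν hx) hf.aestronglyMeasurable.restrict ?_
  filter_upwards [ae_restrict_mem measurableSet_Ioi] with t ht
  rw [Real.norm_eq_abs, Real.norm_eq_abs, Real.abs_exp]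
  exact hb t ht


lemma intK (x ν : ℝ) (hx : 0 < x) (hν : 0 ≤ ν) :
    IntegrableOn (fun t => Real.exp (-(x * Real.cosh t)) * Real.cosh (ν * t))
      (Set.Ioi 0) := by
  refine integrableOn_of_le_exp (by fun_prop) x ν hx fun t ht => ?_
  have h1 : Real.cosh (ν * t) ≤ Real.exp (ν * t) := cosh_le_exp (by positivity)
  rw [abs_of_nonneg (by positivity)]
  calc Real.exp (-(x * Real.cosh t)) * Real.cosh (ν * t)
      ≤ Real.exp (-(x * Real.cosh t)) * Real.exp (ν * t) := by
        exact mul_le_mul_of_nonneg_left h1 (Real.exp_pos _).le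
    _ = Real.exp (ν * t - x * Real.cosh t) := by rw [← Real.exp_add]; congr 1; ring

lemma intB (x ν : ℝ) (hx : 0 < x) (hν : 0 ≤ ν) :
    IntegrableOn (fun t => Real.exp (-(x * Real.cosh t)) * (Real.cosh t * Real.cosh (ν * t)))
      (Set.Ioi 0) := by
  refine integrableOn_of_le_exp (by fun_prop) x (ν + 1) hx fun t ht => ?_
  have h1 : Real.cosh (ν * t) ≤ Real.exp (ν * t) := cosh_le_exp (by positivity)
  have h2 : Real.cosh t ≤ Real.exp t := cosh_le_exp ht.le
  have c1 := Real.cosh_pos (x := t)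
  have c2 := Real.cosh_pos (x := ν * t)
  rw [abs_of_nonneg (by positivity)]
  calc Real.exp (-(x * Real.cosh t)) * (Real.cosh t * Real.cosh (ν * t))
      ≤ Real.exp (-(x * Real.cosh t)) * (Real.exp t * Real.exp (ν * t)) := by
        have : Real.cosh t * Real.cosh (ν * t) ≤ Real.exp t * Real.exp (ν * t) := by
          exact mul_le_mul h2 h1 c2.le (Real.exp_pos _).le
        exact mul_le_mul_of_nonneg_left this (Real.exp_pos _).le
    _ = Real.exp ((ν + 1) * t - x * Real.cosh t) := by
        rw [← Real.exp_add, ← Real.exp_add]; congr 1; ring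

lemma intS (x ν : ℝ) (hx : 0 < x) (hν : 0 ≤ ν) :
    IntegrableOn (fun t => Real.exp (-(x * Real.cosh t)) * (Real.sinh t * Real.sinh (ν * t)))
      (Set.Ioi 0) := by
  refine integrableOn_of_le_exp (by fun_prop) x (ν + 1) hx fun t ht => ?_
  have h1 : Real.cosh (ν * t) ≤ Real.exp (ν * t) := cosh_le_exp (by positivity)
  have h2 : Real.cosh t ≤ Real.exp t := cosh_le_exp ht.le
  have s1 := abs_sinh_le_cosh t
  have s2 := abs_sinh_le_cosh (ν * t)
  rw [abs_mul, Real.abs_exp, abs_mul]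
  calc Real.exp (-(x * Real.cosh t)) * (|Real.sinh t| * |Real.sinh (ν * t)|)
      ≤ Real.exp (-(x * Real.cosh t)) * (Real.exp t * Real.exp (ν * t)) := by
        have : |Real.sinh t| * |Real.sinh (ν * t)| ≤ Real.exp t * Real.exp (ν * t) :=
          mul_le_mul (s1.trans h2) (s2.trans h1) (abs_nonneg _) (Real.exp_pos _).le
        exact mul_le_mul_of_nonneg_left this (Real.exp_pos _).le
    _ = Real.exp ((ν + 1) * t - x * Real.cosh t) := by
        rw [← Real.exp_add, ← Real.exp_add]; congr 1; ring

lemma besselK_nonneg (ν x : ℝ) : 0 ≤ besselK ν x := by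
  refine setIntegral_nonneg measurableSet_Ioi fun t _ => ?_
  positivity

lemma besselK_lb (ν x T : ℝ) (hν : 0 ≤ ν) (hx : 0 < x) (hT : 0 < T) :
    T * Real.exp (-(x * Real.cosh T)) ≤ besselK ν x := by
  have hint := intK x ν hx hν
  have h2 : ∫ t in Ioo (0:ℝ) T, Real.exp (-(x * Real.cosh t)) * Real.cosh (ν * t)
      ≤ besselK ν x := by
    refine setIntegral_mono_set hint ?_ ?_
    · filter_upwards [ae_restrict_mem measurableSet_Ioi] with t _; positivity
    · exact HasSubset.Subset.eventuallyLE Ioo_subset_Ioi_self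
  refine le_trans ?_ h2
  have h1 : ∫ t in Ioo (0:ℝ) T, Real.exp (-(x * Real.cosh T))
      ≤ ∫ t in Ioo (0:ℝ) T, Real.exp (-(x * Real.cosh t)) * Real.cosh (ν * t) := by
    refine setIntegral_mono_on (integrableOn_const measure_Ioo_lt_top.ne)
      (hint.mono_set Ioo_subset_Ioi_self) measurableSet_Ioo fun t ht => ?_
    have hct : Real.cosh t ≤ Real.cosh T := by
      rw [Real.cosh_le_cosh]
      rw [abs_of_pos ht.1, abs_of_pos hT]
      exact ht.2.le
    calc Real.exp (-(x * Real.cosh T)) ≤ Real.exp (-(x * Real.cosh t)) :=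
          Real.exp_le_exp.2 (by nlinarith)
      _ ≤ Real.exp (-(x * Real.cosh t)) * Real.cosh (ν * t) := by
          nth_rewrite 1 [← mul_one (Real.exp _)]
          exact mul_le_mul_of_nonneg_left (Real.one_le_cosh _) (Real.exp_pos _).le
  refine le_trans (le_of_eq ?_) h1
  rw [setIntegral_const]
  simp [Real.volume_Ioo, ENNReal.toReal_ofReal hT.le, hT.le]

lemma besselK_pos (ν x : ℝ) (hν : 0 ≤ ν) (hx : 0 < x) : 0 < besselK ν x := by
  have := besselK_lb ν x 1 hν hx one_pos
  have : (0:ℝ) < 1 * Real.exp (-(x * Real.cosh 1)) := by positivity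
  linarith [besselK_lb ν x 1 hν hx one_pos]

lemma besselK_tendsto_atTop (ν : ℝ) (hν : 0 ≤ ν) :
    Tendsto (fun x => besselK ν x) (𝓝[>] (0:ℝ)) atTop := by
  rw [Filter.tendsto_atTop]
  intro M
  set T : ℝ := 2 * max M 1 with hTdef
  have hT : 0 < T := by
    have : (1:ℝ) ≤ max M 1 := le_max_right _ _
    positivity
  have hr : 0 < Real.log 2 / Real.cosh T := by
    have := Real.cosh_pos (x := T)
    have h2 : (0:ℝ) < Real.log 2 := Real.log_pos one_lt_two
    positivity
  filter_upwards [Ioo_mem_nhdsGT_of_mem (show (0:ℝ) ∈ Ico 0 (Real.log 2 / Real.cosh T) from ⟨le_refl _, hr⟩)] with x hx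
  have hx0 : 0 < x := hx.1
  have hxr : x < Real.log 2 / Real.cosh T := hx.2
  have hcT := Real.cosh_pos (x := T)
  have h1 : x * Real.cosh T ≤ Real.log 2 := by
    rw [div_eq_mul_inv] at hxr
    calc x * Real.cosh T ≤ (Real.log 2 * (Real.cosh T)⁻¹) * Real.cosh T := by
          exact mul_le_mul_of_nonneg_right hxr.le hcT.le
      _ = Real.log 2 := by field_simp
  have h2 : (1:ℝ)/2 ≤ Real.exp (-(x * Real.cosh T)) := by
    have : Real.exp (-(Real.log 2)) = 1/2 := by
      rw [Real.exp_neg, Real.exp_log two_pos]; norm_num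
    calc (1:ℝ)/2 = Real.exp (-(Real.log 2)) := this.symm
      _ ≤ Real.exp (-(x * Real.cosh T)) := Real.exp_le_exp.2 (by linarith)
  calc M ≤ max M 1 := le_max_left _ _
    _ = T * (1/2) := by rw [hTdef]; ring
    _ ≤ T * Real.exp (-(x * Real.cosh T)) := by
        exact mul_le_mul_of_nonneg_left h2 hT.le
    _ ≤ besselK ν x := besselK_lb ν x T hν hx0 hT


/-- The derivative-integrand for `besselI` at integer order. -/
noncomputable def besselI' (j : ℕ) (y : ℝ) : ℝ :=
  (1 / π) * ∫ θ in (0:ℝ)..π, Real.cos θ * (Real.exp (y * Real.cos θ) * Real.cos (j * θ))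

lemma besselI_eq (j : ℕ) :
    (fun y => besselI j y)
      = fun y => (1 / π) * ∫ θ in (0:ℝ)..π, Real.exp (y * Real.cos θ) * Real.cos (j * θ) := by
  funext y
  unfold besselI
  rw [Real.sin_nat_mul_pi]
  simp

lemma hasDerivAt_besselI (j : ℕ) (y : ℝ) :
    HasDerivAt (fun y => besselI j y) (besselI' j y) y := by
  rw [besselI_eq]
  unfold besselI'
  have hd := intervalIntegral.hasDerivAt_integral_of_dominated_loc_of_deriv_le
    (μ := volume) (a := (0:ℝ)) (b := π)
    (F := fun y θ => Real.exp (y * Real.cos θ) * Real.cos ((j:ℝ) * θ))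
    (F' := fun y θ => Real.cos θ * (Real.exp (y * Real.cos θ) * Real.cos ((j:ℝ) * θ)))
    (x₀ := y) (bound := fun _ => Real.exp (|y| + 1))
    (ball_mem_nhds y one_pos)
    (Eventually.of_forall fun u => (Continuous.aestronglyMeasurable (by fun_prop)).restrict)
    (Continuous.intervalIntegrable (by fun_prop) 0 π)
    ((Continuous.aestronglyMeasurable (by fun_prop)).restrict)
    ?_ (intervalIntegrable_const) ?_
  · exact (hd.2.const_mul _)
  · refine Eventually.of_forall fun θ _ u hu => ?_
    rw [mem_ball, Real.dist_eq] at hu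
    have h1 : |u| ≤ |y| + 1 := by
      have := abs_sub_abs_le_abs_sub u y
      linarith
    have h2 : u * Real.cos θ ≤ |y| + 1 := by
      calc u * Real.cos θ ≤ |u * Real.cos θ| := le_abs_self _
        _ = |u| * |Real.cos θ| := abs_mul _ _
        _ ≤ (|y| + 1) * 1 :=
            mul_le_mul h1 (Real.abs_cos_le_one θ) (abs_nonneg _) (by positivity)
        _ = |y| + 1 := mul_one _
    rw [Real.norm_eq_abs, abs_mul, abs_mul, Real.abs_exp]
    calc |Real.cos θ| * (Real.exp (u * Real.cos θ) * |Real.cos ((j:ℝ) * θ)|)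
        ≤ 1 * (Real.exp (|y| + 1) * 1) := by
          refine mul_le_mul (Real.abs_cos_le_one θ) ?_ (by positivity) one_pos.le
          exact mul_le_mul (Real.exp_le_exp.2 h2) (Real.abs_cos_le_one _)
            (abs_nonneg _) (Real.exp_pos _).le
      _ = Real.exp (|y| + 1) := by ring
  · refine Eventually.of_forall fun θ _ u _ => ?_
    have h1 : HasDerivAt (fun u : ℝ => u * Real.cos θ) (Real.cos θ) u := by
      simpa using (hasDerivAt_id u).mul_const (Real.cos θ)
    have h2 := (h1.exp).mul_const (Real.cos ((j:ℝ) * θ))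
    exact h2.congr_deriv (by ring)

lemma besselI_bound (j : ℕ) (y : ℝ) : |besselI j y| ≤ Real.exp |y| := by
  have hπ := Real.pi_pos
  rw [show besselI (j:ℝ) y = (fun y => besselI (j:ℝ) y) y from rfl, besselI_eq]
  simp only
  rw [abs_mul, abs_of_nonneg (by positivity : (0:ℝ) ≤ 1/π)]
  have h := intervalIntegral.norm_integral_le_of_norm_le_const
    (C := Real.exp |y|)
    (f := fun θ => Real.exp (y * Real.cos θ) * Real.cos ((j:ℝ) * θ)) (a := 0) (b := π)
    (fun θ _ => by
      rw [Real.norm_eq_abs, abs_mul, Real.abs_exp]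
      calc Real.exp (y * Real.cos θ) * |Real.cos ((j:ℝ)*θ)|
          ≤ Real.exp |y| * 1 := by
            refine mul_le_mul (Real.exp_le_exp.2 ?_) (Real.abs_cos_le_one _)
              (abs_nonneg _) (Real.exp_pos _).le
            calc y * Real.cos θ ≤ |y * Real.cos θ| := le_abs_self _
              _ = |y| * |Real.cos θ| := abs_mul _ _
              _ ≤ |y| * 1 := mul_le_mul_of_nonneg_left (Real.abs_cos_le_one _) (abs_nonneg _)
              _ = |y| := mul_one _
        _ = Real.exp |y| := mul_one _)
  rw [Real.norm_eq_abs] at h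
  calc (1/π) * |∫ θ in (0:ℝ)..π, Real.exp (y * Real.cos θ) * Real.cos ((j:ℝ) * θ)|
      ≤ (1/π) * (Real.exp |y| * |π - 0|) := by
        exact mul_le_mul_of_nonneg_left h (by positivity)
    _ = Real.exp |y| := by
        rw [sub_zero, abs_of_pos hπ]; field_simp

lemma besselI'_bound (j : ℕ) (y : ℝ) : |besselI' j y| ≤ Real.exp |y| := by
  have hπ := Real.pi_pos
  unfold besselI'
  rw [abs_mul, abs_of_nonneg (by positivity : (0:ℝ) ≤ 1/π)]
  have h := intervalIntegral.norm_integral_le_of_norm_le_const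
    (C := Real.exp |y|)
    (f := fun θ => Real.cos θ * (Real.exp (y * Real.cos θ) * Real.cos ((j:ℝ) * θ)))
    (a := 0) (b := π)
    (fun θ _ => by
      rw [Real.norm_eq_abs, abs_mul, abs_mul, Real.abs_exp]
      calc |Real.cos θ| * (Real.exp (y * Real.cos θ) * |Real.cos ((j:ℝ)*θ)|)
          ≤ 1 * (Real.exp |y| * 1) := by
            refine mul_le_mul (Real.abs_cos_le_one _) ?_ (by positivity) one_pos.le
            refine mul_le_mul (Real.exp_le_exp.2 ?_) (Real.abs_cos_le_one _)
              (abs_nonneg _) (Real.exp_pos _).le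
            calc y * Real.cos θ ≤ |y * Real.cos θ| := le_abs_self _
              _ = |y| * |Real.cos θ| := abs_mul _ _
              _ ≤ |y| * 1 := mul_le_mul_of_nonneg_left (Real.abs_cos_le_one _) (abs_nonneg _)
              _ = |y| := mul_one _
        _ = Real.exp |y| := by ring)
  rw [Real.norm_eq_abs] at h
  calc (1/π) * |∫ θ in (0:ℝ)..π, Real.cos θ * (Real.exp (y * Real.cos θ) * Real.cos ((j:ℝ) * θ))|
      ≤ (1/π) * (Real.exp |y| * |π - 0|) := mul_le_mul_of_nonneg_left h (by positivity)
    _ = Real.exp |y| := by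
        rw [sub_zero, abs_of_pos hπ]; field_simp


/-- Differentiation under the integral sign for `besselK`. -/
lemma hasDerivAt_besselK (ν : ℝ) (hν : 0 ≤ ν) {x : ℝ} (hx : 0 < x) :
    HasDerivAt (fun y => besselK ν y)
      (-∫ t in Set.Ioi (0:ℝ), Real.exp (-(x * Real.cosh t)) * (Real.cosh t * Real.cosh (ν * t)))
      x := by
  have hd := hasDerivAt_integral_of_dominated_loc_of_deriv_le
    (μ := volume.restrict (Set.Ioi (0:ℝ)))
    (F := fun y t => Real.exp (-(y * Real.cosh t)) * Real.cosh (ν * t))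
    (F' := fun y t => -(Real.exp (-(y * Real.cosh t)) * (Real.cosh t * Real.cosh (ν * t))))
    (x₀ := x)
    (bound := fun t => Real.exp (-((x/2) * Real.cosh t)) * (Real.cosh t * Real.cosh (ν * t)))
    (ball_mem_nhds x (half_pos hx))
    (Eventually.of_forall fun y => (Continuous.aestronglyMeasurable (by fun_prop)).restrict)
    (intK x ν hx hν)
    ((Continuous.aestronglyMeasurable (by fun_prop)).restrict)
    ?_ (intB (x/2) ν (half_pos hx) hν) ?_
  · have := hd.2
    rw [integral_neg] at this
    exact this
  · filter_upwards [ae_restrict_mem measurableSet_Ioi] with t ht y hy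
    have hy2 : x/2 ≤ y := by
      rw [mem_ball, Real.dist_eq, abs_lt] at hy
      linarith
    have hch := Real.cosh_pos (x := t)
    have hchn := Real.cosh_pos (x := ν * t)
    rw [norm_neg, Real.norm_eq_abs, abs_of_nonneg (by positivity)]
    have : Real.exp (-(y * Real.cosh t)) ≤ Real.exp (-((x/2) * Real.cosh t)) :=
      Real.exp_le_exp.2 (by nlinarith)
    exact mul_le_mul_of_nonneg_right this (by positivity)
  · filter_upwards [ae_restrict_mem measurableSet_Ioi] with t ht y hy
    have h1 : HasDerivAt (fun y : ℝ => -(y * Real.cosh t)) (-Real.cosh t) y := by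
      simpa [Pi.neg_def] using ((hasDerivAt_id y).mul_const (Real.cosh t)).neg
    have h2 := (h1.exp).mul_const (Real.cosh (ν * t))
    exact h2.congr_deriv (by ring)

/-- Integration by parts: `ν * K_ν = x * ∫ sinh·sinh`. -/
lemma ibp (ν : ℝ) (hν : 0 ≤ ν) {x : ℝ} (hx : 0 < x) :
    ν * besselK ν x
      = x * ∫ t in Set.Ioi (0:ℝ),
          Real.exp (-(x * Real.cosh t)) * (Real.sinh t * Real.sinh (ν * t)) := by
  set f : ℝ → ℝ := fun t => Real.exp (-(x * Real.cosh t)) * Real.sinh (ν * t) with hf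
  set f' : ℝ → ℝ := fun t =>
    ν * (Real.exp (-(x * Real.cosh t)) * Real.cosh (ν * t))
      - x * (Real.exp (-(x * Real.cosh t)) * (Real.sinh t * Real.sinh (ν * t))) with hf'
  have hderiv : ∀ t : ℝ, HasDerivAt f (f' t) t := by
    intro t
    have h1 : HasDerivAt (fun t : ℝ => -(x * Real.cosh t)) (-(x * Real.sinh t)) t :=
      ((Real.hasDerivAt_cosh t).const_mul x).neg
    have h2 := h1.exp
    have h3 : HasDerivAt (fun t : ℝ => Real.sinh (ν * t)) (Real.cosh (ν * t) * ν) t := by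
      simpa using (((hasDerivAt_id t).const_mul ν).sinh)
    have h4 := h2.mul h3
    exact h4.congr_deriv (by simp only [hf']; ring)
  have hint : IntegrableOn f' (Set.Ioi 0) :=
    ((intK x ν hx hν).const_mul ν).sub ((intS x ν hx hν).const_mul x)
  have htends : Tendsto f atTop (𝓝 0) := by
    obtain ⟨c, hc0, hc⟩ := decay_bound x ν hx
    refine squeeze_zero_norm' (a := fun t => c * Real.exp (-t)) ?_ ?_
    · filter_upwards [eventually_ge_atTop (0:ℝ)] with t ht
      have h1 : |Real.sinh (ν * t)| ≤ Real.exp (ν * t) :=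
        (abs_sinh_le_cosh _).trans (cosh_le_exp (by positivity))
      have : ‖f t‖ ≤ Real.exp (ν * t - x * Real.cosh t) := by
        rw [Real.norm_eq_abs, hf, abs_mul, Real.abs_exp]
        calc Real.exp (-(x * Real.cosh t)) * |Real.sinh (ν * t)|
            ≤ Real.exp (-(x * Real.cosh t)) * Real.exp (ν * t) :=
              mul_le_mul_of_nonneg_left h1 (Real.exp_pos _).le
          _ = Real.exp (ν * t - x * Real.cosh t) := by
              rw [← Real.exp_add]; congr 1; ring
      exact this.trans (hc t ht)
    · simpa using (Real.tendsto_exp_neg_atTop_nhds_zero).const_mul c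
  have hibp : ∫ t in Set.Ioi (0:ℝ), f' t = 0 - f 0 :=
    MeasureTheory.integral_Ioi_of_hasDerivAt_of_tendsto
      (hderiv 0).continuousAt.continuousWithinAt
      (fun t _ => hderiv t) hint htends
  have hf0 : f 0 = 0 := by simp [hf]
  rw [hf0, sub_zero] at hibp
  have hsplit : ∫ t in Set.Ioi (0:ℝ), f' t
      = ν * besselK ν x
        - x * ∫ t in Set.Ioi (0:ℝ),
            Real.exp (-(x * Real.cosh t)) * (Real.sinh t * Real.sinh (ν * t)) := by
    rw [hf']
    rw [integral_sub ((intK x ν hx hν).const_mul ν) ((intS x ν hx hν).const_mul x)]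
    rw [MeasureTheory.integral_const_mul, MeasureTheory.integral_const_mul]
    rfl
  rw [hsplit] at hibp
  linarith

/-- The key identity: `x * B = ν * K_ν + x * K_{ν-1}`. -/
lemma key_identity (ν : ℝ) (hν : 1 ≤ ν) {x : ℝ} (hx : 0 < x) :
    x * ∫ t in Set.Ioi (0:ℝ),
        Real.exp (-(x * Real.cosh t)) * (Real.cosh t * Real.cosh (ν * t))
      = ν * besselK ν x + x * besselK (ν - 1) x := by
  have hν0 : (0:ℝ) ≤ ν := by linarith
  have hsplit : ∫ t in Set.Ioi (0:ℝ),
      Real.exp (-(x * Real.cosh t)) * (Real.cosh t * Real.cosh (ν * t))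
      = (∫ t in Set.Ioi (0:ℝ),
          Real.exp (-(x * Real.cosh t)) * (Real.sinh t * Real.sinh (ν * t)))
        + besselK (ν - 1) x := by
    rw [besselK, ← integral_add (intS x ν hx hν0) (intK x (ν-1) hx (by linarith))]
    refine setIntegral_congr_fun measurableSet_Ioi fun t _ => ?_
    have : Real.cosh ((ν - 1) * t) = Real.cosh (ν * t) * Real.cosh t
        - Real.sinh (ν * t) * Real.sinh t := by
      rw [show (ν - 1) * t = ν * t - t by ring, Real.cosh_sub]
    rw [this]; ring
  rw [hsplit, mul_add, ← ibp ν hν0 hx]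

/-- `K_{ν-1} ≤ K_ν`. -/
lemma besselK_mono (ν : ℝ) (hν : 1 ≤ ν) {x : ℝ} (hx : 0 < x) :
    besselK (ν - 1) x ≤ besselK ν x := by
  refine setIntegral_mono_on (intK x (ν-1) hx (by linarith)) (intK x ν hx (by linarith))
    measurableSet_Ioi fun t ht => ?_
  have ht0 : (0:ℝ) < t := ht
  have : Real.cosh ((ν - 1) * t) ≤ Real.cosh (ν * t) := by
    rw [Real.cosh_le_cosh, abs_of_nonneg (by nlinarith), abs_of_nonneg (by nlinarith)]
    nlinarith
  exact mul_le_mul_of_nonneg_left this (Real.exp_pos _).le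


end Stmt13Aux

open Stmt13Aux

theorem stmt13 (δ lam : ℝ) (hδ : 0 < δ) (hlam : 0 < lam) (j : ℕ) (hj : 1 ≤ j)
    (C : ℝ) (hC : C = besselK j (Real.sqrt lam * δ) / besselI j (Real.sqrt lam * δ)) :
    Tendsto (fun ε : ℝ =>
        ε * (Real.sqrt lam *
            (C * deriv (fun y => besselI j y) (Real.sqrt lam * ε)
              - deriv (fun y => besselK j y) (Real.sqrt lam * ε)) /
          (besselK j (Real.sqrt lam * ε) - C * besselI j (Real.sqrt lam * ε))))
      (𝓝[>] 0) (𝓝 (j : ℝ)) := by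
  have hs : 0 < Real.sqrt lam := Real.sqrt_pos.2 hlam
  set ν : ℝ := (j : ℝ) with hνdef
  have hν1 : (1:ℝ) ≤ ν := by rw [hνdef]; exact_mod_cast hj
  have hν0 : (0:ℝ) ≤ ν := by linarith
  set l := 𝓝[>] (0:ℝ) with hl
  -- key pointwise formula
  have hkey : ∀ x : ℝ, 0 < x →
      x * (C * deriv (fun y => besselI ν y) x - deriv (fun y => besselK ν y) x)
        = x * C * besselI' j x + ν * besselK ν x + x * besselK (ν - 1) x := by
    intro x hx
    have hdI : deriv (fun y => besselI ν y) x = besselI' j x :=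
      (hasDerivAt_besselI j x).deriv
    have hdK := (hasDerivAt_besselK ν hν0 hx).deriv
    rw [hdI, hdK, sub_neg_eq_add, mul_add, key_identity ν hν1 hx]
    ring
  have hKtop : Tendsto (fun x => besselK ν x) l atTop := besselK_tendsto_atTop ν hν0
  have hK1 : ∀ᶠ x in l, 1 ≤ besselK ν x := hKtop.eventually_ge_atTop 1
  have hx01 : ∀ᶠ x in l, x ∈ Ioo (0:ℝ) 1 :=
    Ioo_mem_nhdsGT_of_mem ⟨le_refl (0:ℝ), one_pos⟩
  -- T1
  have T1 : Tendsto (fun x => x * C * besselI' j x / besselK ν x) l (𝓝 0) := by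
    refine squeeze_zero_norm' ?_
      ((tendsto_const_nhds (x := |C| * Real.exp 1)).div_atTop hKtop)
    filter_upwards [hx01, hK1] with x hx hK
    have hKpos : 0 < besselK ν x := lt_of_lt_of_le one_pos hK
    have hI' : |besselI' j x| ≤ Real.exp 1 :=
      (besselI'_bound j x).trans (Real.exp_le_exp.2 (by
        rw [abs_of_pos hx.1]; linarith [hx.2]))
    rw [Real.norm_eq_abs, abs_div, abs_of_pos hKpos]
    gcongr
    calc |x * C * besselI' j x| = |x| * |C| * |besselI' j x| := by
          rw [abs_mul, abs_mul]
      _ ≤ 1 * |C| * Real.exp 1 := by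
          refine mul_le_mul (mul_le_mul ?_ le_rfl (abs_nonneg _) zero_le_one) hI'
            (abs_nonneg _) (by positivity)
          rw [abs_of_pos hx.1]; exact hx.2.le
      _ = |C| * Real.exp 1 := by ring
  -- T2
  have T2 : Tendsto (fun x => ν * besselK ν x / besselK ν x) l (𝓝 ν) := by
    refine Tendsto.congr' ?_ (tendsto_const_nhds (x := ν))
    filter_upwards [hK1] with x hK
    have hKne : besselK ν x ≠ 0 := by linarith
    rw [mul_div_assoc, div_self hKne, mul_one]
  -- T3
  have T3 : Tendsto (fun x => x * besselK (ν - 1) x / besselK ν x) l (𝓝 0) := by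
    refine squeeze_zero_norm' (a := fun x => x) ?_
      (tendsto_id.mono_right nhdsWithin_le_nhds)
    filter_upwards [hx01, hK1] with x hx hK
    have hKpos : 0 < besselK ν x := lt_of_lt_of_le one_pos hK
    have hKm0 : 0 ≤ besselK (ν - 1) x := besselK_nonneg _ _
    have hnn : 0 ≤ x * besselK (ν - 1) x / besselK ν x :=
      div_nonneg (mul_nonneg hx.1.le hKm0) hKpos.le
    rw [Real.norm_eq_abs, abs_of_nonneg hnn, mul_div_assoc]
    calc x * (besselK (ν - 1) x / besselK ν x) ≤ x * 1 := by
          refine mul_le_mul_of_nonneg_left ?_ hx.1.le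
          exact (div_le_one hKpos).2 (besselK_mono ν hν1 hx.1)
      _ = x := mul_one x
  -- T4
  have T4 : Tendsto (fun x => C * besselI ν x / besselK ν x) l (𝓝 0) := by
    refine squeeze_zero_norm' ?_
      ((tendsto_const_nhds (x := |C| * Real.exp 1)).div_atTop hKtop)
    filter_upwards [hx01, hK1] with x hx hK
    have hKpos : 0 < besselK ν x := lt_of_lt_of_le one_pos hK
    have hI : |besselI ν x| ≤ Real.exp 1 :=
      (besselI_bound j x).trans (Real.exp_le_exp.2 (by
        rw [abs_of_pos hx.1]; linarith [hx.2]))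
    rw [Real.norm_eq_abs, abs_div, abs_of_pos hKpos]
    gcongr
    calc |C * besselI ν x| = |C| * |besselI ν x| := abs_mul _ _
      _ ≤ |C| * Real.exp 1 := mul_le_mul_of_nonneg_left hI (abs_nonneg _)
  -- numerator and denominator limits
  have hnum : Tendsto (fun x =>
      (x * C * besselI' j x + ν * besselK ν x + x * besselK (ν - 1) x) / besselK ν x)
      l (𝓝 ν) := by
    have h := (T1.add T2).add T3
    rw [zero_add, add_zero] at h
    refine Tendsto.congr' ?_ h
    filter_upwards with x
    rw [add_div, add_div]
  have hden : Tendsto (fun x =>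
      (besselK ν x - C * besselI ν x) / besselK ν x) l (𝓝 1) := by
    have hKK : Tendsto (fun x => besselK ν x / besselK ν x) l (𝓝 1) := by
      refine Tendsto.congr' ?_ (tendsto_const_nhds (x := (1:ℝ)))
      filter_upwards [hK1] with x hK
      rw [div_self (by linarith : besselK ν x ≠ 0)]
    have h := hKK.sub T4
    rw [sub_zero] at h
    refine Tendsto.congr' ?_ h
    filter_upwards with x
    rw [sub_div]
  have hg : Tendsto (fun x =>
      (x * C * besselI' j x + ν * besselK ν x + x * besselK (ν - 1) x)
        / (besselK ν x - C * besselI ν x)) l (𝓝 ν) := by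
    have h := hnum.div hden one_ne_zero
    rw [div_one] at h
    refine Tendsto.congr' ?_ h
    filter_upwards [hK1] with x hK
    have hKne : besselK ν x ≠ 0 := by linarith
    rcases eq_or_ne (besselK ν x - C * besselI ν x) 0 with h0 | h0
    · rw [h0]; simp [h0]
    · simp only [Pi.div_apply]
      field_simp
  -- composition
  have hmap : Tendsto (fun ε : ℝ => Real.sqrt lam * ε) l l := by
    rw [hl]
    refine tendsto_nhdsWithin_of_tendsto_nhds_of_eventually_within _ ?_ ?_
    · have h : Tendsto (fun ε : ℝ => Real.sqrt lam * ε) (𝓝 (0:ℝ))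
          (𝓝 (Real.sqrt lam * 0)) := by
        exact (continuous_const.mul continuous_id : Continuous fun ε : ℝ => Real.sqrt lam * ε).tendsto 0
      rw [mul_zero] at h
      exact h.mono_left nhdsWithin_le_nhds
    · filter_upwards [self_mem_nhdsWithin] with ε hε
      exact mul_pos hs hε
  have hcomp := hg.comp hmap
  refine Tendsto.congr' ?_ hcomp
  filter_upwards [self_mem_nhdsWithin] with ε hε
  have hx : 0 < Real.sqrt lam * ε := mul_pos hs hε
  have h1 := hkey (Real.sqrt lam * ε) hx
  simp only [Function.comp]
  rw [← h1]
  ring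
end

section
/- Fix $\delta>0$ and $\lambda>0$, and let $C_\delta=\frac{K_0(\sqrt{\lambda}\delta)}{I_0(\sqrt{\lambda}\delta)}$. Define for $0<\varepsilon<\delta$ $$\sigma(\varepsilon)=\frac{\sqrt{\lambda}\big(C_\delta I_1(\sqrt{\lambda}\varepsilon)+K_1(\sqrt{\lambda}\varepsilon)\big)}{K_0(\sqrt{\lambda}\varepsilon)-C_\delta I_0(\sqrt{\lambda}\varepsilon)}.$$ Then $\lim_{\varepsilon\to 0^+}\varepsilon\,|\log\varepsilon|\,\sigma(\varepsilon)=1$. -/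
open MeasureTheory Filter Real Topology

section helpers
open Set

lemma sinh_tendsto : Tendsto Real.sinh atTop atTop := by
  apply tendsto_atTop_mono' atTop (eventually_atTop.2 ⟨0, fun t ht => ?_⟩)
    ((tendsto_atTop_add_const_right _ (-1) tendsto_exp_atTop).atTop_div_const two_pos)
  rw [Real.sinh_eq]
  have : Real.exp (-t) ≤ 1 := Real.exp_le_one_iff.2 (neg_nonpos.2 ht)
  linarith

lemma cosh_le_exp' {t : ℝ} (ht : 0 ≤ t) : Real.cosh t ≤ Real.exp t := by
  rw [Real.cosh_eq]
  nlinarith [Real.exp_le_exp.2 (neg_le_self ht), Real.exp_pos t]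

lemma cosh_sub_sinh_le_one {t : ℝ} (ht : 0 ≤ t) : Real.cosh t - Real.sinh t ≤ 1 := by
  rw [Real.cosh_eq, Real.sinh_eq]
  have : Real.exp (-t) ≤ 1 := Real.exp_le_one_iff.2 (neg_nonpos.2 ht)
  linarith

lemma half_exp_le_cosh (t : ℝ) : Real.exp t / 2 ≤ Real.cosh t := by
  rw [Real.cosh_eq]; nlinarith [Real.exp_pos (-t)]

lemma key_deriv (x : ℝ) (t : ℝ) :
    HasDerivAt (fun t => -Real.exp (-(x * Real.sinh t)))
      (x * Real.cosh t * Real.exp (-(x * Real.sinh t))) t := by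
  have h1 : HasDerivAt (fun t => -(x * Real.sinh t)) (-(x * Real.cosh t)) t :=
    ((Real.hasDerivAt_sinh t).const_mul x).neg
  have h2 := (Real.hasDerivAt_exp _).comp t h1
  refine h2.neg.congr_deriv ?_
  ring

lemma key_tendsto (x : ℝ) (hx : 0 < x) :
    Tendsto (fun t => -Real.exp (-(x * Real.sinh t))) atTop (𝓝 0) := by
  have h1 : Tendsto (fun t : ℝ => -(x * Real.sinh t)) atTop atBot :=
    tendsto_neg_atTop_atBot.comp (sinh_tendsto.const_mul_atTop hx)
  simpa using (Real.tendsto_exp_atBot.comp h1).neg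

lemma key_integrable (x : ℝ) (hx : 0 < x) :
    IntegrableOn (fun t => x * Real.cosh t * Real.exp (-(x * Real.sinh t))) (Ioi 0) :=
  integrableOn_Ioi_deriv_of_nonneg' (fun t _ => key_deriv x t)
    (fun t _ => by positivity) (key_tendsto x hx)

lemma key_integral (x : ℝ) (hx : 0 < x) :
    ∫ t in Ioi (0:ℝ), x * Real.cosh t * Real.exp (-(x * Real.sinh t)) = 1 := by
  rw [integral_Ioi_of_hasDerivAt_of_nonneg' (fun t _ => key_deriv x t)
    (fun t _ => by positivity) (key_tendsto x hx)]
  simp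

lemma sinh_le_cosh' (t : ℝ) : Real.sinh t ≤ Real.cosh t := by
  rw [Real.cosh_eq, Real.sinh_eq]; nlinarith [Real.exp_pos (-t)]

lemma K1_integrable (x : ℝ) (hx : 0 < x) :
    IntegrableOn (fun t => Real.exp (-(x * Real.cosh t)) * Real.cosh t) (Ioi 0) := by
  refine Integrable.mono ((key_integrable x hx).const_mul (1/x)) ?_ ?_
  · exact ((Real.continuous_exp.comp
      (continuous_const.mul Real.continuous_cosh).neg).mul
        Real.continuous_cosh).aestronglyMeasurable.restrict
  · filter_upwards [ae_restrict_mem measurableSet_Ioi] with t ht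
    have h2 : Real.exp (-(x * Real.cosh t)) ≤ Real.exp (-(x * Real.sinh t)) :=
      Real.exp_le_exp.2 (by nlinarith [sinh_le_cosh' t])
    have hc : (0:ℝ) < Real.cosh t := Real.cosh_pos t
    rw [Real.norm_eq_abs, Real.norm_eq_abs, abs_of_nonneg (by positivity),
      abs_of_nonneg (by positivity)]
    calc Real.exp (-(x * Real.cosh t)) * Real.cosh t
        ≤ Real.exp (-(x * Real.sinh t)) * Real.cosh t := by nlinarith
      _ = 1/x * (x * Real.cosh t * Real.exp (-(x * Real.sinh t))) := by field_simp

lemma K0_integrable (x : ℝ) (hx : 0 < x) :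
    IntegrableOn (fun t => Real.exp (-(x * Real.cosh t))) (Ioi 0) := by
  refine Integrable.mono (K1_integrable x hx) ?_ ?_
  · exact (Real.continuous_exp.comp
      (continuous_const.mul Real.continuous_cosh).neg).aestronglyMeasurable.restrict
  · filter_upwards [] with t
    rw [Real.norm_eq_abs, Real.norm_eq_abs, abs_of_nonneg (Real.exp_pos _).le,
      abs_of_nonneg (by positivity)]
    nlinarith [Real.one_le_cosh t, Real.exp_pos (-(x * Real.cosh t))]

lemma K1_upper (x : ℝ) (hx : 0 < x) :
    x * ∫ t in Ioi (0:ℝ), Real.exp (-(x * Real.cosh t)) * Real.cosh t ≤ 1 := by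
  rw [← key_integral x hx, ← integral_const_mul]
  refine setIntegral_mono_on ((K1_integrable x hx).const_mul x) (key_integrable x hx)
    measurableSet_Ioi fun t ht => ?_
  have ht' : (0:ℝ) ≤ t := le_of_lt ht
  have h2 : Real.exp (-(x * Real.cosh t)) ≤ Real.exp (-(x * Real.sinh t)) :=
    Real.exp_le_exp.2 (by nlinarith [sinh_le_cosh' t])
  have h3 := mul_le_mul_of_nonneg_left h2 (by positivity : (0:ℝ) ≤ x * Real.cosh t)
  nlinarith [h3]

lemma K1_lower (x : ℝ) (hx : 0 < x) :
    Real.exp (-x) ≤ x * ∫ t in Ioi (0:ℝ), Real.exp (-(x * Real.cosh t)) * Real.cosh t := by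
  have h := key_integral x hx
  calc Real.exp (-x) = Real.exp (-x) * ∫ t in Ioi (0:ℝ),
        x * Real.cosh t * Real.exp (-(x * Real.sinh t)) := by rw [h, mul_one]
    _ = ∫ t in Ioi (0:ℝ), Real.exp (-x) * (x * Real.cosh t * Real.exp (-(x * Real.sinh t))) := by
        rw [integral_const_mul]
    _ ≤ ∫ t in Ioi (0:ℝ), x * (Real.exp (-(x * Real.cosh t)) * Real.cosh t) := by
        refine setIntegral_mono_on ((key_integrable x hx).const_mul _)
          ((K1_integrable x hx).const_mul x) measurableSet_Ioi fun t ht => ?_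
        have ht' : (0:ℝ) ≤ t := le_of_lt ht
        have h1 : Real.exp (-x) * Real.exp (-(x * Real.sinh t)) ≤
            Real.exp (-(x * Real.cosh t)) := by
          rw [← Real.exp_add]
          exact Real.exp_le_exp.2 (by nlinarith [cosh_sub_sinh_le_one ht'])
        have h3 := mul_le_mul_of_nonneg_left h1
          (by positivity : (0:ℝ) ≤ x * Real.cosh t)
        calc Real.exp (-x) * (x * Real.cosh t * Real.exp (-(x * Real.sinh t)))
            = x * Real.cosh t * (Real.exp (-x) * Real.exp (-(x * Real.sinh t))) := by ring
          _ ≤ x * Real.cosh t * Real.exp (-(x * Real.cosh t)) := h3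
          _ = x * (Real.exp (-(x * Real.cosh t)) * Real.cosh t) := by ring
    _ = x * ∫ t in Ioi (0:ℝ), Real.exp (-(x * Real.cosh t)) * Real.cosh t := integral_const_mul _ _

lemma K0_lower (x : ℝ) (hx : 0 < x) (hx1 : x < 1) :
    -Real.log x - 1 ≤ ∫ t in Ioi (0:ℝ), Real.exp (-(x * Real.cosh t)) := by
  set T := -Real.log x with hTdef
  have hT : 0 < T := neg_pos.2 (Real.log_neg hx hx1)
  have heT : Real.exp T = x⁻¹ := by rw [hTdef, Real.exp_neg, Real.exp_log hx]
  have step1 : ∫ t in Ioc (0:ℝ) T, Real.exp (-(x * Real.cosh t))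
      ≤ ∫ t in Ioi (0:ℝ), Real.exp (-(x * Real.cosh t)) := by
    refine setIntegral_mono_set (K0_integrable x hx) ?_ ?_
    · filter_upwards [] with t using (Real.exp_pos _).le
    · filter_upwards [] with t ht using ht.1
  have step2 : ∫ t in Ioc (0:ℝ) T, (1 - x * Real.exp t)
      ≤ ∫ t in Ioc (0:ℝ) T, Real.exp (-(x * Real.cosh t)) := by
    refine setIntegral_mono_on ?_ ((K0_integrable x hx).mono_set Ioc_subset_Ioi_self)
      measurableSet_Ioc fun t ht => ?_
    · exact (continuous_const.sub
        (continuous_const.mul Real.continuous_exp)).integrableOn_Ioc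
    · have h1 : Real.cosh t ≤ Real.exp t := cosh_le_exp' ht.1.le
      have h2 : 1 + -(x * Real.cosh t) ≤ Real.exp (-(x * Real.cosh t)) := by
        linarith [Real.add_one_le_exp (-(x * Real.cosh t))]
      nlinarith
  have step3 : ∫ t in Ioc (0:ℝ) T, (1 - x * Real.exp t) = T - x * (x⁻¹ - 1) := by
    rw [← intervalIntegral.integral_of_le hT.le, intervalIntegral.integral_sub
      intervalIntegrable_const ((intervalIntegral.intervalIntegrable_exp).const_mul x),
      intervalIntegral.integral_const, intervalIntegral.integral_const_mul,
      integral_exp, heT]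
    simp
  have : T - 1 ≤ T - x * (x⁻¹ - 1) := by
    have : x * (x⁻¹ - 1) = 1 - x := by field_simp
    rw [this]; linarith
  linarith

lemma K0_upper (x : ℝ) (hx : 0 < x) (hx1 : x < 1) :
    ∫ t in Ioi (0:ℝ), Real.exp (-(x * Real.cosh t)) ≤ -Real.log x + 2 := by
  set T := -Real.log x with hTdef
  have hT : 0 < T := neg_pos.2 (Real.log_neg hx hx1)
  have heT : Real.exp T = x⁻¹ := by rw [hTdef, Real.exp_neg, Real.exp_log hx]
  have hcoshT : 1/(2*x) ≤ Real.cosh T := by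
    have := half_exp_le_cosh T
    rw [heT] at this
    calc 1/(2*x) = x⁻¹/2 := by field_simp
      _ ≤ _ := this
  have hcoshTpos : 0 < Real.cosh T := Real.cosh_pos T
  have hsplit : ∫ t in Ioi (0:ℝ), Real.exp (-(x * Real.cosh t))
      = (∫ t in Ioc (0:ℝ) T, Real.exp (-(x * Real.cosh t)))
        + ∫ t in Ioi T, Real.exp (-(x * Real.cosh t)) := by
    rw [← setIntegral_union (Ioc_disjoint_Ioi le_rfl) measurableSet_Ioi
      ((K0_integrable x hx).mono_set Ioc_subset_Ioi_self)
      ((K0_integrable x hx).mono_set (Ioi_subset_Ioi hT.le)),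
      Ioc_union_Ioi_eq_Ioi hT.le]
  have part1 : ∫ t in Ioc (0:ℝ) T, Real.exp (-(x * Real.cosh t)) ≤ T := by
    calc ∫ t in Ioc (0:ℝ) T, Real.exp (-(x * Real.cosh t))
        ≤ ∫ _t in Ioc (0:ℝ) T, (1:ℝ) := by
          refine setIntegral_mono_on ((K0_integrable x hx).mono_set Ioc_subset_Ioi_self)
            (integrableOn_const (by simp [hT.le])) measurableSet_Ioc
            fun t _ => ?_
          exact Real.exp_le_one_iff.2 (by nlinarith [Real.cosh_pos t])
      _ = T := by simp [hT.le]
  have part2 : ∫ t in Ioi T, Real.exp (-(x * Real.cosh t)) ≤ 2 := by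
    have pt : ∀ t ∈ Ioi T, Real.exp (-(x * Real.cosh t))
        ≤ (Real.cosh T)⁻¹ * (Real.exp (-(x * Real.cosh t)) * Real.cosh t) := by
      intro t ht
      have h1 : Real.cosh T ≤ Real.cosh t := by
        rw [Real.cosh_le_cosh]
        rw [abs_of_nonneg hT.le, abs_of_nonneg (hT.le.trans (le_of_lt ht))]
        exact le_of_lt ht
      have h2 : (1:ℝ) ≤ (Real.cosh T)⁻¹ * Real.cosh t := by
        rw [le_inv_mul_iff₀ hcoshTpos]
        simpa using h1
      nlinarith [Real.exp_pos (-(x * Real.cosh t))]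
    calc ∫ t in Ioi T, Real.exp (-(x * Real.cosh t))
        ≤ ∫ t in Ioi T, (Real.cosh T)⁻¹ * (Real.exp (-(x * Real.cosh t)) * Real.cosh t) := by
          refine setIntegral_mono_on ((K0_integrable x hx).mono_set (Ioi_subset_Ioi hT.le))
            (((K1_integrable x hx).mono_set (Ioi_subset_Ioi hT.le)).const_mul _)
            measurableSet_Ioi pt
      _ = (Real.cosh T)⁻¹ * ∫ t in Ioi T, Real.exp (-(x * Real.cosh t)) * Real.cosh t :=
          integral_const_mul _ _
      _ ≤ (Real.cosh T)⁻¹ * ∫ t in Ioi (0:ℝ), Real.exp (-(x * Real.cosh t)) * Real.cosh t := by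
          refine mul_le_mul_of_nonneg_left ?_ (by positivity)
          refine setIntegral_mono_set (K1_integrable x hx) ?_ ?_
          · filter_upwards [] with t
            positivity
          · filter_upwards [] with t ht using lt_of_le_of_lt hT.le ht
      _ ≤ (Real.cosh T)⁻¹ * (1/x) := by
          refine mul_le_mul_of_nonneg_left ?_ (by positivity)
          rw [le_div_iff₀ hx, mul_comm]
          exact K1_upper x hx
      _ ≤ 2 := by
          rw [inv_mul_le_iff₀ hcoshTpos]
          calc (1:ℝ)/x ≤ 2 * (1/(2*x)) := by
                rw [mul_one_div]
                ring_nf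
                exact le_rfl
            _ ≤ 2 * Real.cosh T := by linarith
            _ = Real.cosh T * 2 := by ring
  linarith [hsplit, part1, part2]

end helpers

lemma besselK1_eq (x : ℝ) :
    besselK 1 x = ∫ t in Set.Ioi (0:ℝ), Real.exp (-(x * Real.cosh t)) * Real.cosh t := by
  simp [besselK]

lemma besselK0_eq (x : ℝ) :
    besselK 0 x = ∫ t in Set.Ioi (0:ℝ), Real.exp (-(x * Real.cosh t)) := by
  simp [besselK]

lemma besselI0_eq (x : ℝ) :
    besselI 0 x = (1 / π) * ∫ θ in (0:ℝ)..π, Real.exp (x * Real.cos θ) := by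
  simp [besselI]

lemma besselI1_eq (x : ℝ) :
    besselI 1 x = (1 / π) * ∫ θ in (0:ℝ)..π, Real.exp (x * Real.cos θ) * Real.cos θ := by
  simp [besselI, Real.sin_pi]

lemma I0_bounds (x : ℝ) :
    Real.exp (-|x|) ≤ besselI 0 x ∧ besselI 0 x ≤ Real.exp |x| := by
  rw [besselI0_eq]
  have hcont : Continuous fun θ : ℝ => Real.exp (x * Real.cos θ) :=
    Real.continuous_exp.comp (continuous_const.mul Real.continuous_cos)
  have hpt : ∀ θ : ℝ, Real.exp (-|x|) ≤ Real.exp (x * Real.cos θ) ∧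
      Real.exp (x * Real.cos θ) ≤ Real.exp |x| := by
    intro θ
    have h1 : |x * Real.cos θ| ≤ |x| := by
      rw [abs_mul]
      nlinarith [abs_cos_le_one θ, abs_nonneg x, abs_nonneg (Real.cos θ)]
    rw [abs_le] at h1
    exact ⟨Real.exp_le_exp.2 (by linarith), Real.exp_le_exp.2 (by linarith)⟩
  have hInt := hcont.intervalIntegrable (μ := volume) 0 π
  have hlow : π * Real.exp (-|x|) ≤ ∫ θ in (0:ℝ)..π, Real.exp (x * Real.cos θ) := by
    have := intervalIntegral.integral_mono_on (μ := volume) Real.pi_pos.le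
      intervalIntegrable_const hInt (fun θ _ => (hpt θ).1)
    simpa [mul_comm] using this
  have hup : (∫ θ in (0:ℝ)..π, Real.exp (x * Real.cos θ)) ≤ π * Real.exp |x| := by
    have := intervalIntegral.integral_mono_on (μ := volume) Real.pi_pos.le
      hInt intervalIntegrable_const (fun θ _ => (hpt θ).2)
    simpa [mul_comm] using this
  have hπ : (0:ℝ) < 1/π := by positivity
  constructor
  · calc Real.exp (-|x|) = (1/π) * (π * Real.exp (-|x|)) := by field_simp
      _ ≤ _ := mul_le_mul_of_nonneg_left hlow hπ.le
  · calc (1/π) * ∫ θ in (0:ℝ)..π, Real.exp (x * Real.cos θ)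
        ≤ (1/π) * (π * Real.exp |x|) := mul_le_mul_of_nonneg_left hup hπ.le
      _ = Real.exp |x| := by field_simp

lemma I1_bound (x : ℝ) : |besselI 1 x| ≤ Real.exp |x| := by
  rw [besselI1_eq]
  have h : ∀ θ ∈ Set.uIoc (0:ℝ) π, ‖Real.exp (x * Real.cos θ) * Real.cos θ‖ ≤ Real.exp |x| := by
    intro θ _
    rw [Real.norm_eq_abs, abs_mul, abs_of_nonneg (Real.exp_pos _).le]
    have h1 : x * Real.cos θ ≤ |x| := by
      have := abs_cos_le_one θ
      nlinarith [neg_abs_le x, le_abs_self x, neg_abs_le (Real.cos θ), le_abs_self (Real.cos θ)]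
    nlinarith [Real.exp_pos (x * Real.cos θ), Real.exp_le_exp.2 h1, abs_cos_le_one θ,
      abs_nonneg (Real.cos θ), Real.exp_pos (|x|)]
  have := intervalIntegral.norm_integral_le_of_norm_le_const h
  rw [abs_mul, abs_of_nonneg (by positivity : (0:ℝ) ≤ 1/π)]
  rw [Real.norm_eq_abs] at this
  calc 1/π * |∫ θ in (0:ℝ)..π, Real.exp (x * Real.cos θ) * Real.cos θ|
      ≤ 1/π * (Real.exp |x| * |π - 0|) := by
        refine mul_le_mul_of_nonneg_left ?_ (by positivity)
        exact this
    _ = Real.exp |x| := by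
        rw [sub_zero, abs_of_nonneg Real.pi_pos.le]
        field_simp

lemma M1 : Tendsto (fun x => x * besselK 1 x) (𝓝[>] 0) (𝓝 1) := by
  have hlow : Tendsto (fun x : ℝ => Real.exp (-x)) (𝓝[>] 0) (𝓝 1) := by
    have := ((Real.continuous_exp.comp continuous_neg).tendsto 0).mono_left
      (nhdsWithin_le_nhds (s := Set.Ioi (0:ℝ)))
    simpa [Function.comp_def] using this
  refine tendsto_of_tendsto_of_tendsto_of_le_of_le' hlow tendsto_const_nhds ?_ ?_
  · filter_upwards [self_mem_nhdsWithin] with x hx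
    rw [besselK1_eq]
    exact K1_lower x hx
  · filter_upwards [self_mem_nhdsWithin] with x hx
    rw [besselK1_eq]
    exact K1_upper x hx

lemma hLtop : Tendsto (fun ε : ℝ => -Real.log ε) (𝓝[>] 0) atTop := by
  exact tendsto_neg_atBot_atTop.comp Real.tendsto_log_nhdsGT_zero

lemma hLinv : Tendsto (fun ε : ℝ => (-Real.log ε)⁻¹) (𝓝[>] 0) (𝓝 0) :=
  hLtop.inv_tendsto_atTop

lemma M2 (S : ℝ) (hS : 0 < S) :
    Tendsto (fun ε => besselK 0 (S * ε) / (-Real.log ε)) (𝓝[>] 0) (𝓝 1) := by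
  have hη : (0:ℝ) < min 1 S⁻¹ := lt_min one_pos (by positivity)
  have hmem : Set.Ioo (0:ℝ) (min 1 S⁻¹) ∈ 𝓝[>] (0:ℝ) :=
    Ioo_mem_nhdsGT_of_mem ⟨le_rfl, hη⟩
  have hlow : Tendsto (fun ε : ℝ => 1 + (-Real.log S - 1) * (-Real.log ε)⁻¹)
      (𝓝[>] 0) (𝓝 1) := by
    have := tendsto_const_nhds (α := ℝ) (x := (1:ℝ)) (f := 𝓝[>] (0:ℝ)) |>.add
      ((tendsto_const_nhds (x := -Real.log S - 1)).mul hLinv)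
    simpa using this
  have hup : Tendsto (fun ε : ℝ => 1 + (2 - Real.log S) * (-Real.log ε)⁻¹)
      (𝓝[>] 0) (𝓝 1) := by
    have := tendsto_const_nhds (α := ℝ) (x := (1:ℝ)) (f := 𝓝[>] (0:ℝ)) |>.add
      ((tendsto_const_nhds (x := 2 - Real.log S)).mul hLinv)
    simpa using this
  have common : ∀ ε ∈ Set.Ioo (0:ℝ) (min 1 S⁻¹),
      0 < ε ∧ 0 < S * ε ∧ S * ε < 1 ∧ 0 < -Real.log ε ∧
        Real.log (S * ε) = Real.log S + Real.log ε := by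
    intro ε hε
    have hε0 : 0 < ε := hε.1
    have hε1 : ε < 1 := lt_of_lt_of_le hε.2 (min_le_left _ _)
    have hx : 0 < S * ε := mul_pos hS hε0
    have hx1 : S * ε < 1 := by
      have := hε.2.trans_le (min_le_right 1 S⁻¹)
      calc S * ε < S * S⁻¹ := by gcongr
        _ = 1 := mul_inv_cancel₀ hS.ne'
    exact ⟨hε0, hx, hx1, neg_pos.2 (Real.log_neg hε0 hε1),
      Real.log_mul hS.ne' hε0.ne'⟩
  refine tendsto_of_tendsto_of_tendsto_of_le_of_le' hlow hup ?_ ?_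
  · filter_upwards [hmem] with ε hε
    obtain ⟨hε0, hx, hx1, hL0, hlog⟩ := common ε hε
    have hlogne : Real.log ε ≠ 0 := by intro h; rw [h] at hL0; simp at hL0
    have hK0l := K0_lower (S * ε) hx hx1
    rw [← besselK0_eq] at hK0l
    have heq : 1 + (-Real.log S - 1) * (-Real.log ε)⁻¹
        = (-Real.log (S * ε) - 1) / (-Real.log ε) := by
      rw [hlog]; field_simp [hlogne]; ring
    rw [heq]
    gcongr
  · filter_upwards [hmem] with ε hε
    obtain ⟨hε0, hx, hx1, hL0, hlog⟩ := common ε hε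
    have hlogne : Real.log ε ≠ 0 := by intro h; rw [h] at hL0; simp at hL0
    have hK0u := K0_upper (S * ε) hx hx1
    rw [← besselK0_eq] at hK0u
    have heq : 1 + (2 - Real.log S) * (-Real.log ε)⁻¹
        = (-Real.log (S * ε) + 2) / (-Real.log ε) := by
      rw [hlog]; field_simp [hlogne]; ring
    rw [heq]
    gcongr

lemma M3 (S : ℝ) (hS : 0 < S) :
    Tendsto (fun ε => besselI 0 (S * ε)) (𝓝[>] 0) (𝓝 1) := by
  have hlow : Tendsto (fun ε : ℝ => Real.exp (-|S * ε|)) (𝓝[>] 0) (𝓝 1) := by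
    have : Continuous fun ε : ℝ => Real.exp (-|S * ε|) := by continuity
    have := (this.tendsto 0).mono_left (nhdsWithin_le_nhds (s := Set.Ioi (0:ℝ)))
    simpa using this
  have hup : Tendsto (fun ε : ℝ => Real.exp |S * ε|) (𝓝[>] 0) (𝓝 1) := by
    have : Continuous fun ε : ℝ => Real.exp |S * ε| := by continuity
    have := (this.tendsto 0).mono_left (nhdsWithin_le_nhds (s := Set.Ioi (0:ℝ)))
    simpa using this
  refine tendsto_of_tendsto_of_tendsto_of_le_of_le' hlow hup ?_ ?_
  · filter_upwards [] with ε using (I0_bounds (S * ε)).1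
  · filter_upwards [] with ε using (I0_bounds (S * ε)).2

lemma M4 (S : ℝ) (hS : 0 < S) :
    Tendsto (fun ε => besselI 0 (S * ε) * (-Real.log ε)⁻¹) (𝓝[>] 0) (𝓝 0) := by
  have hg : Tendsto (fun ε : ℝ => Real.exp |S * ε| * (-Real.log ε)⁻¹) (𝓝[>] 0) (𝓝 0) := by
    have hup : Tendsto (fun ε : ℝ => Real.exp |S * ε|) (𝓝[>] 0) (𝓝 1) := by
      have : Continuous fun ε : ℝ => Real.exp |S * ε| := by continuity
      have := (this.tendsto 0).mono_left (nhdsWithin_le_nhds (s := Set.Ioi (0:ℝ)))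
      simpa using this
    simpa using hup.mul hLinv
  refine squeeze_zero_norm' ?_ hg
  filter_upwards [Ioo_mem_nhdsGT_of_mem (Set.left_mem_Ico.2 one_pos)] with ε hε
  have hL0 : 0 < -Real.log ε := neg_pos.2 (Real.log_neg hε.1 hε.2)
  have hI := I0_bounds (S * ε)
  have hIpos : 0 < besselI 0 (S * ε) := lt_of_lt_of_le (Real.exp_pos _) hI.1
  rw [Real.norm_eq_abs, abs_mul, abs_of_nonneg hIpos.le, abs_of_nonneg (by positivity)]
  exact mul_le_mul_of_nonneg_right hI.2 (by positivity)

lemma hScomp (S : ℝ) (hS : 0 < S) :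
    Tendsto (fun ε : ℝ => S * ε) (𝓝[>] 0) (𝓝[>] 0) := by
  rw [tendsto_nhdsWithin_iff]
  constructor
  · have hc : Continuous fun ε : ℝ => S * ε := continuous_const.mul continuous_id
    have := (hc.tendsto (0:ℝ)).mono_left (nhdsWithin_le_nhds (s := Set.Ioi (0:ℝ)))
    simpa using this
  · filter_upwards [self_mem_nhdsWithin] with ε hε using mul_pos hS hε

lemma M5 (S : ℝ) (hS : 0 < S) :
    Tendsto (fun ε => S * ε * besselK 1 (S * ε)) (𝓝[>] 0) (𝓝 1) :=
  M1.comp (hScomp S hS)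

lemma M6 (S : ℝ) (hS : 0 < S) :
    Tendsto (fun ε => S * ε * besselI 1 (S * ε)) (𝓝[>] 0) (𝓝 0) := by
  have hg : Tendsto (fun ε : ℝ => |S * ε| * Real.exp |S * ε|) (𝓝[>] 0) (𝓝 0) := by
    have : Continuous fun ε : ℝ => |S * ε| * Real.exp |S * ε| := by continuity
    have := (this.tendsto 0).mono_left (nhdsWithin_le_nhds (s := Set.Ioi (0:ℝ)))
    simpa using this
  refine squeeze_zero_norm' ?_ hg
  filter_upwards [] with ε
  rw [Real.norm_eq_abs, abs_mul]
  exact mul_le_mul_of_nonneg_left (I1_bound (S * ε)) (abs_nonneg _)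

theorem stmt14 (δ lam : ℝ) (hδ : 0 < δ) (hlam : 0 < lam)
    (C : ℝ) (hC : C = besselK 0 (Real.sqrt lam * δ) / besselI 0 (Real.sqrt lam * δ)) :
    Tendsto (fun ε : ℝ =>
        ε * |Real.log ε| * (Real.sqrt lam *
            (C * besselI 1 (Real.sqrt lam * ε) + besselK 1 (Real.sqrt lam * ε)) /
          (besselK 0 (Real.sqrt lam * ε) - C * besselI 0 (Real.sqrt lam * ε))))
      (𝓝[>] 0) (𝓝 1) := by
  set S := Real.sqrt lam with hSdef
  have hS : 0 < S := Real.sqrt_pos.2 hlam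
  set g : ℝ → ℝ := fun ε => S * ε * (C * besselI 1 (S * ε) + besselK 1 (S * ε)) with hgdef
  set h : ℝ → ℝ := fun ε =>
    (besselK 0 (S * ε) - C * besselI 0 (S * ε)) / |Real.log ε| with hhdef
  have hg : Tendsto g (𝓝[>] 0) (𝓝 1) := by
    have := ((tendsto_const_nhds (x := C)).mul (M6 S hS)).add (M5 S hS)
    have h2 : Tendsto (fun ε => C * (S * ε * besselI 1 (S * ε)) + S * ε * besselK 1 (S * ε))
        (𝓝[>] 0) (𝓝 1) := by simpa using this
    refine h2.congr fun ε => ?_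
    simp only [hgdef]; ring
  have hh : Tendsto h (𝓝[>] 0) (𝓝 1) := by
    have h1 := (M2 S hS).sub ((tendsto_const_nhds (x := C)).mul (M4 S hS))
    have h2 : Tendsto (fun ε => besselK 0 (S * ε) / (-Real.log ε)
        - C * (besselI 0 (S * ε) * (-Real.log ε)⁻¹)) (𝓝[>] 0) (𝓝 1) := by
      simpa using h1
    refine h2.congr' ?_
    filter_upwards [Ioo_mem_nhdsGT_of_mem (Set.left_mem_Ico.2 one_pos)] with ε hε
    have hlogle : Real.log ε ≤ 0 := (Real.log_neg hε.1 hε.2).le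
    simp only [hhdef]
    rw [abs_of_nonpos hlogle, sub_div]
    rw [div_eq_mul_inv, div_eq_mul_inv, mul_assoc]
  have hdiv := hg.div hh one_ne_zero
  rw [div_one] at hdiv
  refine hdiv.congr fun ε => ?_
  simp only [hgdef, hhdef, Pi.div_apply]
  rw [div_div_eq_mul_div, ← mul_div_assoc]
  congr 1
  ring
end
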